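/- A simple graph G on a countably infinite vertex set is ME-homogeneous if and only if G is MB-homogeneous or there exists a finite n ≥ 2 such that G is isomorphic to the disjoint union of countably infinitely many complete graphs each on n vertices. -/

import Mathlib

open Classical in
/-- Extend `f` by mapping `a` to `b`. -/
noncomputable def extendBy {V : Type} (f : V → V) (a b : V) : V → V :=
  Function.update f a b

section Defs

variable {V : Type}

/-- `f` is a graph homomorphism on the finite induced subgraph on `A`. -/
def IsHomOn (G : SimpleGraph V) (A : Finset V) (f : V → V) : Prop :=
  ∀ ⦃u v : V⦄, u ∈ A → v ∈ A → G.Adj u v → G.Adj (f u) (f v)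

/-- `f` is an injective graph homomorphism (monomorphism) on `A`. -/
def IsMonOn (G : SimpleGraph V) (A : Finset V) (f : V → V) : Prop :=
  IsHomOn G A f ∧ Set.InjOn f (↑A : Set V)

/-- `f` is an isomorphism of the induced subgraph on `A` onto its image. -/
def IsIsoOn (G : SimpleGraph V) (A : Finset V) (f : V → V) : Prop :=
  Set.InjOn f (↑A : Set V) ∧
    ∀ ⦃u v : V⦄, u ∈ A → v ∈ A → (G.Adj u v ↔ G.Adj (f u) (f v))

/-- `F` is a graph homomorphism `G → G`. -/
def IsHomEndo (G : SimpleGraph V) (F : V → V) : Prop :=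
  ∀ ⦃u v : V⦄, G.Adj u v → G.Adj (F u) (F v)

/-- `F` is an injective graph homomorphism `G → G`. -/
def IsMonEndo (G : SimpleGraph V) (F : V → V) : Prop :=
  IsHomEndo G F ∧ Function.Injective F

/-- `F` is a self-embedding of `G`. -/
def IsEmbEndo (G : SimpleGraph V) (F : V → V) : Prop :=
  Function.Injective F ∧ ∀ u v : V, G.Adj u v ↔ G.Adj (F u) (F v)

/-- `F` is a surjective graph homomorphism `G → G`. -/
def IsEpiEndo (G : SimpleGraph V) (F : V → V) : Prop :=
  IsHomEndo G F ∧ Function.Surjective F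

/-- `F` is a bijective graph homomorphism `G → G`. -/
def IsBiEndo (G : SimpleGraph V) (F : V → V) : Prop :=
  IsHomEndo G F ∧ Function.Bijective F

/-- `F` is an automorphism of `G`. -/
def IsAutEndo (G : SimpleGraph V) (F : V → V) : Prop :=
  Function.Bijective F ∧ ∀ u v : V, G.Adj u v ↔ G.Adj (F u) (F v)

def IsHHHom (G : SimpleGraph V) : Prop :=
  ∀ (A : Finset V) (f : V → V), IsHomOn G A f →
    ∃ F : V → V, IsHomEndo G F ∧ ∀ a ∈ A, F a = f a

def IsHMHom (G : SimpleGraph V) : Prop :=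
  ∀ (A : Finset V) (f : V → V), IsHomOn G A f →
    ∃ F : V → V, IsMonEndo G F ∧ ∀ a ∈ A, F a = f a

def IsHIHom (G : SimpleGraph V) : Prop :=
  ∀ (A : Finset V) (f : V → V), IsHomOn G A f →
    ∃ F : V → V, IsEmbEndo G F ∧ ∀ a ∈ A, F a = f a

def IsHEHom (G : SimpleGraph V) : Prop :=
  ∀ (A : Finset V) (f : V → V), IsHomOn G A f →
    ∃ F : V → V, IsEpiEndo G F ∧ ∀ a ∈ A, F a = f a

def IsHBHom (G : SimpleGraph V) : Prop :=
  ∀ (A : Finset V) (f : V → V), IsHomOn G A f →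
    ∃ F : V → V, IsBiEndo G F ∧ ∀ a ∈ A, F a = f a

def IsHAHom (G : SimpleGraph V) : Prop :=
  ∀ (A : Finset V) (f : V → V), IsHomOn G A f →
    ∃ F : V → V, IsAutEndo G F ∧ ∀ a ∈ A, F a = f a

def IsMHHom (G : SimpleGraph V) : Prop :=
  ∀ (A : Finset V) (f : V → V), IsMonOn G A f →
    ∃ F : V → V, IsHomEndo G F ∧ ∀ a ∈ A, F a = f a

def IsMMHom (G : SimpleGraph V) : Prop :=
  ∀ (A : Finset V) (f : V → V), IsMonOn G A f →
    ∃ F : V → V, IsMonEndo G F ∧ ∀ a ∈ A, F a = f a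

def IsMIHom (G : SimpleGraph V) : Prop :=
  ∀ (A : Finset V) (f : V → V), IsMonOn G A f →
    ∃ F : V → V, IsEmbEndo G F ∧ ∀ a ∈ A, F a = f a

def IsMEHom (G : SimpleGraph V) : Prop :=
  ∀ (A : Finset V) (f : V → V), IsMonOn G A f →
    ∃ F : V → V, IsEpiEndo G F ∧ ∀ a ∈ A, F a = f a

def IsMBHom (G : SimpleGraph V) : Prop :=
  ∀ (A : Finset V) (f : V → V), IsMonOn G A f →
    ∃ F : V → V, IsBiEndo G F ∧ ∀ a ∈ A, F a = f a

def IsMAHom (G : SimpleGraph V) : Prop :=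
  ∀ (A : Finset V) (f : V → V), IsMonOn G A f →
    ∃ F : V → V, IsAutEndo G F ∧ ∀ a ∈ A, F a = f a

def IsIHHom (G : SimpleGraph V) : Prop :=
  ∀ (A : Finset V) (f : V → V), IsIsoOn G A f →
    ∃ F : V → V, IsHomEndo G F ∧ ∀ a ∈ A, F a = f a

def IsIEHom (G : SimpleGraph V) : Prop :=
  ∀ (A : Finset V) (f : V → V), IsIsoOn G A f →
    ∃ F : V → V, IsEpiEndo G F ∧ ∀ a ∈ A, F a = f a

/-- A cone over a finite set `S`: a vertex outside `S` adjacent to every vertex of `S`. -/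
def IsCone (G : SimpleGraph V) (S : Finset V) (v : V) : Prop :=
  v ∉ S ∧ ∀ s ∈ S, G.Adj v s

/-- A co-cone over a finite set `S`: a vertex outside `S` adjacent to no vertex of `S`. -/
def IsCoCone (G : SimpleGraph V) (S : Finset V) (v : V) : Prop :=
  v ∉ S ∧ ∀ s ∈ S, ¬ G.Adj v s

def HasCoCone (G : SimpleGraph V) (S : Finset V) : Prop :=
  ∃ v : V, IsCoCone G S v

open Classical in
/-- Property (†): every finite surjective homomorphism, and vertex `b` outside its image,
admits a preimage `a` outside the domain such that `f ∪ {(a,b)}` is a homomorphism. -/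
def PropDagger (G : SimpleGraph V) : Prop :=
  ∀ (A : Finset V) (f : V → V), IsHomOn G A f →
    ∀ b : V, b ∉ f '' (↑A : Set V) →
      ∃ a : V, a ∉ A ∧ IsHomOn G (insert a A) (extendBy f a b)

open Classical in
/-- Property (*): every finite surjective monomorphism, and vertex `c` outside its domain,
admits an image `d` outside the codomain such that `f ∪ {(c,d)}` is a homomorphism. -/
def PropStar (G : SimpleGraph V) : Prop :=
  ∀ (A : Finset V) (f : V → V), IsMonOn G A f →
    ∀ c : V, c ∉ A →
      ∃ d : V, d ∉ f '' (↑A : Set V) ∧ IsHomOn G (insert c A) (extendBy f c d)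

/-- The disjoint union of `ι`-many complete graphs, each with vertex set `κ`. -/
def cliqueSum (ι κ : Type) : SimpleGraph (ι × κ) :=
  SimpleGraph.fromRel (fun p q => p.1 = q.1)

end Defs

section MEProof

open Classical

variable {V : Type}

/-- The set of cones (common neighbours) over a finite set. -/
def coneSet (G : SimpleGraph V) (X : Finset V) : Set V := {v | ∀ x ∈ X, G.Adj v x}

lemma coneSet_not_mem {G : SimpleGraph V} {X : Finset V} {v : V}
    (hv : v ∈ coneSet G X) (hx : v ∈ X) : False := G.irrefl (hv v hx)

/-- A bad set: a nonempty coned finite set with only finitely many cones. -/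
def BadSet (G : SimpleGraph V) (X : Finset V) : Prop :=
  X.Nonempty ∧ (coneSet G X).Nonempty ∧ (coneSet G X).Finite

section Ramsey

open Classical in
/-- Ramsey chain of shrinking infinite sets. -/
noncomputable def rchain (G : SimpleGraph V) (M : Set V) : ℕ → Set V
  | 0 => M
  | (n+1) =>
    if h : (rchain G M n).Infinite then
      if ((rchain G M n ∩ {v | G.Adj h.nonempty.some v}) \ {h.nonempty.some}).Infinite
      then (rchain G M n ∩ {v | G.Adj h.nonempty.some v}) \ {h.nonempty.some}
      else rchain G M n \ ({v | G.Adj h.nonempty.some v} ∪ {h.nonempty.some})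
    else ∅

open Classical in
/-- The points chosen along the Ramsey chain. -/
noncomputable def rpt (G : SimpleGraph V) (M : Set V) [Nonempty V] (n : ℕ) : V :=
  if h : (rchain G M n).Infinite then h.nonempty.some else Classical.arbitrary V

variable {G : SimpleGraph V} {M : Set V}

lemma rchain_inf (hM : M.Infinite) : ∀ n, (rchain G M n).Infinite := by
  intro n
  induction n with
  | zero => exact hM
  | succ n ih =>
    simp only [rchain]
    rw [dif_pos ih]
    set a := ih.nonempty.some with ha
    by_cases h2 : ((rchain G M n ∩ {v | G.Adj a v}) \ {a}).Infinite
    · rwa [if_pos h2]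
    · rw [if_neg h2]
      have hdiff : (rchain G M n \ {a}).Infinite := ih.diff (Set.finite_singleton a)
      by_contra h3
      rw [Set.not_infinite] at h2 h3
      apply hdiff
      apply (h2.union h3).subset
      intro x hx
      by_cases hadj : G.Adj a x
      · exact Or.inl ⟨⟨hx.1, hadj⟩, hx.2⟩
      · exact Or.inr ⟨hx.1, fun hmem => by
          rcases hmem with hmem | hmem
          · exact hadj hmem
          · exact hx.2 hmem⟩

variable [Nonempty V]

lemma rpt_eq (hM : M.Infinite) (n : ℕ) :
    rpt G M n = (rchain_inf (G := G) hM n).nonempty.some := by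
  unfold rpt
  rw [dif_pos (rchain_inf (G := G) hM n)]

lemma rpt_mem (hM : M.Infinite) (n : ℕ) : rpt G M n ∈ rchain G M n := by
  rw [rpt_eq hM n]
  exact Set.Nonempty.some_mem _

lemma rchain_succ_sub (hM : M.Infinite) (n : ℕ) :
    rchain G M (n+1) ⊆ rchain G M n \ {rpt G M n} := by
  have h := rchain_inf (G := G) hM n
  simp only [rchain]
  rw [dif_pos h, ← rpt_eq hM n]
  by_cases h2 : ((rchain G M n ∩ {v | G.Adj (rpt G M n) v}) \ {rpt G M n}).Infinite
  · rw [if_pos h2]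
    intro x hx
    exact ⟨hx.1.1, hx.2⟩
  · rw [if_neg h2]
    intro x hx
    exact ⟨hx.1, fun hm => hx.2 (Or.inr hm)⟩

/-- The colour of step `n`. -/
def rcolor (G : SimpleGraph V) (M : Set V) [Nonempty V] (n : ℕ) : Prop :=
  ((rchain G M n ∩ {v | G.Adj (rpt G M n) v}) \ {rpt G M n}).Infinite

lemma rchain_succ_color (hM : M.Infinite) (n : ℕ) (hc : rcolor G M n) :
    rchain G M (n+1) ⊆ {v | G.Adj (rpt G M n) v} := by
  have h := rchain_inf (G := G) hM n
  simp only [rchain]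
  unfold rcolor at hc
  rw [dif_pos h, ← rpt_eq hM n, if_pos hc]
  intro x hx
  exact hx.1.2

lemma rchain_succ_notcolor (hM : M.Infinite) (n : ℕ) (hc : ¬ rcolor G M n) :
    rchain G M (n+1) ⊆ {v | ¬ G.Adj (rpt G M n) v} := by
  have h := rchain_inf (G := G) hM n
  simp only [rchain]
  unfold rcolor at hc
  rw [dif_pos h, ← rpt_eq hM n, if_neg hc]
  intro x hx hadj
  exact hx.2 (Or.inl hadj)

lemma rchain_mono (hM : M.Infinite) {i j : ℕ} (hij : i ≤ j) :
    rchain G M j ⊆ rchain G M i := by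
  induction j with
  | zero => cases Nat.le_zero.1 hij; exact subset_rfl
  | succ j ih =>
    rcases Nat.lt_or_ge i (j+1) with h | h
    · exact ((rchain_succ_sub hM j).trans Set.diff_subset).trans (ih (Nat.lt_succ_iff.1 h))
    · have : i = j + 1 := le_antisymm hij h
      subst this; exact subset_rfl

lemma seq_dichotomy (hM : M.Infinite) :
    ∃ g : ℕ → V, Function.Injective g ∧ (∀ i, g i ∈ M) ∧
      ((∀ i j, i ≠ j → G.Adj (g i) (g j)) ∨ (∀ i j, i ≠ j → ¬ G.Adj (g i) (g j))) := by
  classical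
  have hmemchain : ∀ i j, i < j → rpt G M j ∈ rchain G M (i+1) :=
    fun i j hij => rchain_mono hM hij (rpt_mem hM j)
  have hne : ∀ i j, i < j → rpt G M j ≠ rpt G M i := by
    intro i j hij heq
    have := (rchain_succ_sub hM i) (hmemchain i j hij)
    exact this.2 heq
  have hinj : Function.Injective (rpt G M) := by
    intro i j heq
    by_contra hne'
    rcases lt_trichotomy i j with h | h | h
    · exact hne i j h heq.symm
    · exact hne' h
    · exact hne j i h heq
  have hmemM : ∀ n, rpt G M n ∈ M := fun n => rchain_mono hM (Nat.zero_le n) (rpt_mem hM n)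
  by_cases hT : {n | rcolor G M n}.Infinite
  · obtain e := hT.natEmbedding
    refine ⟨fun n => rpt G M (e n), ?_, fun n => hmemM _, Or.inl ?_⟩
    · intro n m h
      exact e.injective (Subtype.ext (hinj h))
    · have key : ∀ i j, i < j → rcolor G M i → G.Adj (rpt G M i) (rpt G M j) :=
        fun i j hij hc => rchain_succ_color hM i hc (hmemchain i j hij)
      intro n m hnm
      have hvne : ((e n) : ℕ) ≠ ((e m) : ℕ) :=
        fun h => hnm (e.injective (Subtype.ext h))
      rcases lt_or_gt_of_ne hvne with h | h
      · exact key _ _ h (e n).2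
      · exact (key _ _ h (e m).2).symm
  · have hT' : {n | ¬ rcolor G M n}.Infinite := by
      rw [Set.not_infinite] at hT
      have := hT.infinite_compl
      convert this using 1
      rfl
    obtain e := hT'.natEmbedding
    refine ⟨fun n => rpt G M (e n), ?_, fun n => hmemM _, Or.inr ?_⟩
    · intro n m h
      exact e.injective (Subtype.ext (hinj h))
    · have key : ∀ i j, i < j → ¬ rcolor G M i → ¬ G.Adj (rpt G M i) (rpt G M j) :=
        fun i j hij hc => rchain_succ_notcolor hM i hc (hmemchain i j hij)
      intro n m hnm hadj
      have hvne : ((e n) : ℕ) ≠ ((e m) : ℕ) :=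
        fun h => hnm (e.injective (Subtype.ext h))
      rcases lt_or_gt_of_ne hvne with h | h
      · exact key _ _ h (e n).2 hadj
      · exact key _ _ h (e m).2 hadj.symm

end Ramsey

variable {G : SimpleGraph V} [Countable V] [Infinite V]

/-- The image of a coned set under a mono is coned (uses ME). -/
lemma exists_cone_image (hME : IsMEHom G)
    {Y : Finset V} {h : V → V} (hmon : IsMonOn G Y h) {c : V}
    (hc : ∀ y ∈ Y, G.Adj c y) :
    ∃ w, ∀ y ∈ Y, G.Adj w (h y) := by
  obtain ⟨F, hF, hagree⟩ := hME Y h hmon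
  refine ⟨F c, fun y hy => ?_⟩
  have := hF.1 (hc y hy)
  rwa [hagree y hy] at this

/-- Backward extension: every mono extends by a preimage of any vertex outside the image. -/
lemma back_ext (hME : IsMEHom G)
    {A : Finset V} {f : V → V} (hf : IsMonOn G A f) {b : V}
    (hb : b ∉ f '' (↑A : Set V)) :
    ∃ a, a ∉ A ∧ IsMonOn G (insert a A) (extendBy f a b) ∧ extendBy f a b a = b := by
  obtain ⟨F, hF, hagree⟩ := hME A f hf
  obtain ⟨a, ha⟩ := hF.2 b
  have haA : a ∉ A := fun h => hb ⟨a, h, by rw [← hagree a h, ha]⟩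
  have hupd : ∀ v ∈ insert a A, extendBy f a b v = F v := by
    intro v hv
    rcases Finset.mem_insert.1 hv with rfl | hvA
    · simp [extendBy, ha]
    · have hne : v ≠ a := fun h => haA (h ▸ hvA)
      simp only [extendBy, Function.update_of_ne hne]
      exact (hagree v hvA).symm
  refine ⟨a, haA, ⟨?_, ?_⟩, by simp [extendBy]⟩
  · intro u v hu hv huv
    rw [hupd u hu, hupd v hv]
    exact hF.1 huv
  · intro u hu v hv heq
    have hu' : u ∈ insert a A := by exact_mod_cast hu
    have hv' : v ∈ insert a A := by exact_mod_cast hv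
    rcases Finset.mem_insert.1 hu' with rfl | huA <;>
      rcases Finset.mem_insert.1 hv' with rfl | hvA
    · rfl
    · exfalso
      apply hb
      have hvne : v ≠ u := fun h => haA (h ▸ hvA)
      rw [show extendBy f u b u = b by simp [extendBy],
        show extendBy f u b v = f v by simp [extendBy, Function.update_of_ne hvne]] at heq
      exact ⟨v, hvA, heq.symm⟩
    · exfalso
      apply hb
      have hune : u ≠ v := fun h => haA (h ▸ huA)
      rw [show extendBy f v b v = b by simp [extendBy],
        show extendBy f v b u = f u by simp [extendBy, Function.update_of_ne hune]] at heq
      exact ⟨u, huA, heq⟩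
    · have hune : u ≠ a := fun h => haA (h ▸ huA)
      have hvne : v ≠ a := fun h => haA (h ▸ hvA)
      rw [show extendBy f a b u = f u by simp [extendBy, Function.update_of_ne hune],
        show extendBy f a b v = f v by simp [extendBy, Function.update_of_ne hvne]] at heq
      exact hf.2 huA hvA heq

/-- Forward extension, assuming there are no bad sets. -/
lemma forward_ext (hME : IsMEHom G) (hnb : ∀ X : Finset V, ¬ BadSet G X)
    {A : Finset V} {f : V → V} (hf : IsMonOn G A f) {c : V} (hc : c ∉ A) :
    ∃ d, d ∉ f '' (↑A : Set V) ∧ IsMonOn G (insert c A) (extendBy f c d) ∧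
      extendBy f c d c = d := by
  classical
  have hfin : (f '' (↑A : Set V)).Finite := (A.finite_toSet).image f
  set B : Finset V := A.filter (fun x => G.Adj c x) with hB
  have hmemB : ∀ x, x ∈ B ↔ x ∈ A ∧ G.Adj c x := by
    intro x; simp [hB]
  have hd : ∃ d, d ∉ f '' (↑A : Set V) ∧ ∀ x ∈ B, G.Adj d (f x) := by
    rcases B.eq_empty_or_nonempty with hBe | hBne
    · obtain ⟨d, hd⟩ := (Set.infinite_univ.diff hfin).nonempty
      exact ⟨d, hd.2, fun x hx => absurd hx (by simp [hBe])⟩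
    · have hmonB : IsMonOn G B f := by
        refine ⟨fun u v hu hv huv => hf.1 ((hmemB u).1 hu).1 ((hmemB v).1 hv).1 huv, ?_⟩
        exact hf.2.mono (fun x hx => by
          have := (hmemB x).1 (by exact_mod_cast hx); exact this.1)
      obtain ⟨w, hw⟩ := exists_cone_image hME hmonB
        (fun y hy => ((hmemB y).1 hy).2)
      set S : Finset V := B.image f with hS
      have hwS : w ∈ coneSet G S := by
        intro s hs
        obtain ⟨b, hb, rfl⟩ := Finset.mem_image.1 hs
        exact hw b hb
      have hcinf : (coneSet G S).Infinite := by
        by_contra hfin'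
        rw [Set.not_infinite] at hfin'
        exact hnb S ⟨hBne.image f, ⟨w, hwS⟩, hfin'⟩
      obtain ⟨d, hd⟩ := (hcinf.diff hfin).nonempty
      refine ⟨d, hd.2, fun x hx => hd.1 (f x) (Finset.mem_image_of_mem f hx)⟩
  obtain ⟨d, hdim, hdB⟩ := hd
  have hval : ∀ v ∈ A, extendBy f c d v = f v := by
    intro v hv
    have : v ≠ c := fun h => hc (h ▸ hv)
    simp [extendBy, Function.update_of_ne this]
  refine ⟨d, hdim, ⟨?_, ?_⟩, by simp [extendBy]⟩
  · intro u v hu hv huv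
    rcases Finset.mem_insert.1 hu with rfl | huA <;>
      rcases Finset.mem_insert.1 hv with rfl | hvA
    · exact absurd huv G.irrefl
    · rw [show extendBy f u d u = d by simp [extendBy], hval v hvA]
      exact hdB v ((hmemB v).2 ⟨hvA, huv⟩)
    · rw [show extendBy f v d v = d by simp [extendBy], hval u huA]
      exact (hdB u ((hmemB u).2 ⟨huA, huv.symm⟩)).symm
    · rw [hval u huA, hval v hvA]
      exact hf.1 huA hvA huv
  · intro u hu v hv heq
    have hu' : u ∈ insert c A := by exact_mod_cast hu
    have hv' : v ∈ insert c A := by exact_mod_cast hv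
    rcases Finset.mem_insert.1 hu' with rfl | huA <;>
      rcases Finset.mem_insert.1 hv' with rfl | hvA
    · rfl
    · exfalso
      rw [show extendBy f u d u = d by simp [extendBy], hval v hvA] at heq
      exact hdim ⟨v, hvA, heq.symm⟩
    · exfalso
      rw [show extendBy f v d v = d by simp [extendBy], hval u huA] at heq
      exact hdim ⟨u, huA, heq⟩
    · exact hf.2 huA hvA (by rwa [hval u huA, hval v hvA] at heq)

/-- From a cherry, every pair of distinct vertices has a common neighbour. -/
lemma pair_cone (hME : IsMEHom G)
    (hch : ∃ b b' w : V, b ≠ b' ∧ ¬ G.Adj b b' ∧ G.Adj w b ∧ G.Adj w b') :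
    ∀ p q : V, p ≠ q → ∃ w, G.Adj w p ∧ G.Adj w q := by
  classical
  obtain ⟨b, b', w, hbb, hnadj, hwb, hwb'⟩ := hch
  intro p q hpq
  set h : V → V := fun v => if v = b then p else q with hh
  have hhb : h b = p := by simp [hh]
  have hhb' : h b' = q := by simp [hh, hbb.symm]
  have hmon : IsMonOn G ({b, b'} : Finset V) h := by
    constructor
    · intro u v hu hv huv
      exfalso
      rw [Finset.mem_insert, Finset.mem_singleton] at hu hv
      rcases hu with h1 | h1 <;> rcases hv with h2 | h2 <;> rw [h1, h2] at huv
      · exact G.irrefl huv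
      · exact hnadj huv
      · exact hnadj huv.symm
      · exact G.irrefl huv
    · intro u hu v hv heq
      have hu' : u ∈ ({b, b'} : Finset V) := by exact_mod_cast hu
      have hv' : v ∈ ({b, b'} : Finset V) := by exact_mod_cast hv
      rw [Finset.mem_insert, Finset.mem_singleton] at hu' hv'
      rcases hu' with h1 | h1 <;> rcases hv' with h2 | h2
      · rw [h1, h2]
      · exfalso
        rw [h1, h2, hhb, hhb'] at heq
        exact hpq heq
      · exfalso
        rw [h1, h2, hhb', hhb] at heq
        exact hpq heq.symm
      · rw [h1, h2]
  obtain ⟨F, hF, hagr⟩ := hME _ h hmon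
  refine ⟨F w, ?_, ?_⟩
  · have := hF.1 hwb
    rwa [hagr b (by simp), show h b = p by simp [hh]] at this
  · have := hF.1 hwb'
    rwa [hagr b' (by simp), show h b' = q by simp [hh, hbb.symm]] at this

/-- The crux: if `G` is ME-homogeneous and contains a cherry
(two nonadjacent vertices with a common neighbour), then `G` has no bad sets. -/
lemma no_bad_of_cherry (hME : IsMEHom G)
    (hch : ∃ b b' w : V, b ≠ b' ∧ ¬ G.Adj b b' ∧ G.Adj w b ∧ G.Adj w b') :
    ∀ X : Finset V, ¬ BadSet G X := by
  classical
  intro X0 hbad0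
  have T2 : ∀ p q : V, p ≠ q → ∃ w, G.Adj w p ∧ G.Adj w q := pair_cone hME hch
  have hex : ∃ n, ∃ X : Finset V, BadSet G X ∧ (coneSet G X).ncard = n :=
    ⟨_, X0, hbad0, rfl⟩
  obtain ⟨X, hbad, hm⟩ := Nat.find_spec hex
  obtain ⟨hXne, ⟨z0, hz0⟩, hfin⟩ := hbad
  -- F2 : for any cone z, `insert z X` has no cone
  have F2 : ∀ z ∈ coneSet G X, coneSet G (insert z X) = ∅ := by
    intro z hz
    by_contra hne
    obtain ⟨w, hw⟩ := Set.nonempty_iff_ne_empty.2 hne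
    have hzX : z ∉ X := fun h => coneSet_not_mem hz h
    have hsub : coneSet G (insert z X) ⊂ coneSet G X := by
      constructor
      · intro v hv x hx
        exact hv x (Finset.mem_insert_of_mem hx)
      · intro hsup
        have hzc : z ∈ coneSet G (insert z X) := hsup hz
        exact G.irrefl (hzc z (Finset.mem_insert_self _ _))
    have hlt : (coneSet G (insert z X)).ncard < Nat.find hex := by
      rw [← hm]
      exact Set.ncard_lt_ncard hsub hfin
    exact Nat.find_min hex hlt
      ⟨insert z X, ⟨⟨z, Finset.mem_insert_self _ _⟩, ⟨w, hw⟩,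
        hfin.subset hsub.1⟩, rfl⟩
  -- G1 : cones have no neighbours outside X
  have G1 : ∀ z ∈ coneSet G X, ∀ q, G.Adj z q → q ∈ X := by
    intro z hz q hadj
    by_contra hqX
    have hzX : z ∉ X := fun h => coneSet_not_mem hz h
    have hqz : q ≠ z := fun h => G.irrefl (h ▸ hadj)
    set h : V → V := fun v => if v = q then z else v with hh
    have hmon : IsMonOn G (insert q X) h := by
      constructor
      · intro u v hu hv huv
        rcases Finset.mem_insert.1 hu with rfl | huX <;>
          rcases Finset.mem_insert.1 hv with rfl | hvX
        · exact absurd huv G.irrefl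
        · have : v ≠ u := fun hc => hqX (hc ▸ hvX)
          rw [show h u = z by simp [hh], show h v = v by simp [hh, this]]
          exact hz v hvX
        · have : u ≠ v := fun hc => hqX (hc ▸ huX)
          rw [show h v = z by simp [hh], show h u = u by simp [hh, this]]
          exact (hz u huX).symm
        · have h1 : u ≠ q := fun hc => hqX (hc ▸ huX)
          have h2 : v ≠ q := fun hc => hqX (hc ▸ hvX)
          rwa [show h u = u by simp [hh, h1], show h v = v by simp [hh, h2]]
      · intro u hu v hv heq
        have hu' : u ∈ insert q X := by exact_mod_cast hu
        have hv' : v ∈ insert q X := by exact_mod_cast hv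
        rcases Finset.mem_insert.1 hu' with rfl | huX <;>
          rcases Finset.mem_insert.1 hv' with rfl | hvX
        · rfl
        · have h2 : v ≠ u := fun hc => hqX (hc ▸ hvX)
          rw [show h u = z by simp [hh], show h v = v by simp [hh, h2]] at heq
          exact absurd (heq ▸ hvX) hzX
        · have h1 : u ≠ v := fun hc => hqX (hc ▸ huX)
          rw [show h v = z by simp [hh], show h u = u by simp [hh, h1]] at heq
          exact absurd (heq ▸ huX) hzX
        · have h1 : u ≠ q := fun hc => hqX (hc ▸ huX)
          have h2 : v ≠ q := fun hc => hqX (hc ▸ hvX)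
          rwa [show h u = u by simp [hh, h1], show h v = v by simp [hh, h2]] at heq
    have hcone : ∀ y ∈ insert q X, G.Adj z y := by
      intro y hy
      rcases Finset.mem_insert.1 hy with rfl | hyX
      · exact hadj
      · exact hz y hyX
    obtain ⟨w, hw⟩ := exists_cone_image hME hmon hcone
    have : w ∈ coneSet G (insert z X) := by
      intro x hx
      rcases Finset.mem_insert.1 hx with rfl | hxX
      · have := hw q (Finset.mem_insert_self _ _)
        rwa [show h q = x by simp [hh]] at this
      · have := hw x (Finset.mem_insert_of_mem hxX)
        have hxq : x ≠ q := fun hc => hqX (hc ▸ hxX)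
        rwa [show h x = x by simp [hh, hxq]] at this
    rw [F2 z hz] at this
    exact this
  -- G2/G3 : some x* in X has infinitely many neighbours
  have G3 : ∃ x ∈ X, {v | G.Adj x v}.Infinite := by
    by_contra hall
    push_neg at hall
    have hU : (⋃ x ∈ (↑X : Set V), {v | G.Adj x v}).Finite :=
      Set.Finite.biUnion X.finite_toSet (fun x hx => hall x (by exact_mod_cast hx))
    have : (Set.univ : Set V).Finite := by
      apply (hU.union (Set.finite_singleton z0)).subset
      intro p _
      by_cases hp : p = z0
      · exact Or.inr (by simp [hp])
      · obtain ⟨w, hwp, hwz⟩ := T2 p z0 hp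
        have hwX : w ∈ X := G1 z0 hz0 w hwz.symm
        exact Or.inl (Set.mem_biUnion (show w ∈ (↑X : Set V) by exact_mod_cast hwX) hwp)
    exact Set.infinite_univ this
  obtain ⟨xs, hxsX, hxsInf⟩ := G3
  -- the infinite set of neighbours of x* outside X ∪ {z0}
  set M : Set V := {v | G.Adj xs v} \ (↑X ∪ {z0}) with hM
  have hMinf : M.Infinite := hxsInf.diff ((X.finite_toSet).union (Set.finite_singleton z0))
  obtain ⟨g, hginj, hgM, hgd⟩ := seq_dichotomy (G := G) hMinf
  rcases hgd with hadj | hnadj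
  · -- infinite clique: map g 0 to z0, get infinitely many neighbours of z0, all in X
    have hmon : IsMonOn G ({g 0} : Finset V) (fun _ => z0) := by
      constructor
      · intro u v hu hv huv
        rw [Finset.mem_singleton] at hu hv
        exact absurd huv (hu ▸ hv ▸ G.irrefl)
      · intro u hu v hv _
        have hu' : u ∈ ({g 0} : Finset V) := by exact_mod_cast hu
        have hv' : v ∈ ({g 0} : Finset V) := by exact_mod_cast hv
        rw [Finset.mem_singleton] at hu' hv'
        rw [hu', hv']
    obtain ⟨F, hF, hagr⟩ := hME _ _ hmon
    have hFg0 : F (g 0) = z0 := hagr (g 0) (Finset.mem_singleton_self _)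
    have hFX : ∀ i : ℕ, F (g (i+1)) ∈ X := by
      intro i
      have hadj0 : G.Adj (g 0) (g (i+1)) := hadj 0 (i+1) (by omega)
      have := hF.1 hadj0
      rw [hFg0] at this
      exact G1 z0 hz0 _ this
    have hFinj : Function.Injective (fun i : ℕ => F (g (i+1))) := by
      intro i j hij
      by_contra hne
      have : G.Adj (g (i+1)) (g (j+1)) := hadj _ _ (by omega)
      exact (hF.1 this).ne hij
    have : (Set.range (fun i : ℕ => F (g (i+1)))).Infinite :=
      Set.infinite_range_of_injective hFinj
    apply this
    apply (X.finite_toSet).subset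
    rintro _ ⟨i, rfl⟩
    exact_mod_cast hFX i
  · -- infinite independent set: build a coned preimage of `insert z0 X`
    set k := X.card with hk
    set J : Finset V := (Finset.range k).image g with hJ
    have hJcard : J.card = k := by
      rw [hJ, Finset.card_image_of_injective _ hginj, Finset.card_range]
    have hJM : ∀ v ∈ J, v ∈ M := by
      intro v hv
      obtain ⟨i, _, rfl⟩ := Finset.mem_image.1 hv
      exact hgM i
    have hz0J : z0 ∉ J := fun h => ((hJM z0 h).2 (Or.inr rfl))
    have hz0X : z0 ∉ X := fun h => coneSet_not_mem hz0 h
    obtain e := Finset.equivOfCardEq (hJcard.trans hk)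
    set h : V → V := fun v => if hv : v ∈ J then (e ⟨v, hv⟩ : V) else v with hh
    have hhJ : ∀ v (hv : v ∈ J), h v = (e ⟨v, hv⟩ : V) := by
      intro v hv; simp [hh, dif_pos hv]
    have hhz0 : h z0 = z0 := by simp [hh, dif_neg hz0J]
    -- no edges inside `insert z0 J`
    have hnoedge : ∀ u ∈ insert z0 J, ∀ v ∈ insert z0 J, ¬ G.Adj u v := by
      intro u hu v hv huv
      rcases Finset.mem_insert.1 hu with rfl | huJ <;>
        rcases Finset.mem_insert.1 hv with rfl | hvJ
      · exact G.irrefl huv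
      · exact (hJM v hvJ).2 (Or.inl (by exact_mod_cast G1 u hz0 v huv))
      · exact (hJM u huJ).2 (Or.inl (by exact_mod_cast G1 v hz0 u huv.symm))
      · obtain ⟨i, _, rfl⟩ := Finset.mem_image.1 huJ
        obtain ⟨j, _, rfl⟩ := Finset.mem_image.1 hvJ
        rcases eq_or_ne i j with rfl | hij
        · exact G.irrefl huv
        · exact hnadj i j hij huv
    have hmon : IsMonOn G (insert z0 J) h := by
      constructor
      · intro u v hu hv huv
        exact absurd huv (hnoedge u hu v hv)
      · intro u hu v hv heq
        have hu' : u ∈ insert z0 J := by exact_mod_cast hu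
        have hv' : v ∈ insert z0 J := by exact_mod_cast hv
        rcases Finset.mem_insert.1 hu' with rfl | huJ <;>
          rcases Finset.mem_insert.1 hv' with rfl | hvJ
        · rfl
        · exfalso
          rw [hhz0, hhJ v hvJ] at heq
          exact hz0X (heq ▸ (e ⟨v, hvJ⟩).2)
        · exfalso
          rw [hhz0, hhJ u huJ] at heq
          exact hz0X (heq.symm ▸ (e ⟨u, huJ⟩).2)
        · rw [hhJ u huJ, hhJ v hvJ] at heq
          have := e.injective (Subtype.ext heq)
          exact congrArg Subtype.val this
    have hcone : ∀ y ∈ insert z0 J, G.Adj xs y := by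
      intro y hy
      rcases Finset.mem_insert.1 hy with rfl | hyJ
      · exact (hz0 xs hxsX).symm
      · exact (hJM y hyJ).1
    obtain ⟨w, hw⟩ := exists_cone_image hME hmon hcone
    have : w ∈ coneSet G (insert z0 X) := by
      intro x hx
      rcases Finset.mem_insert.1 hx with h1 | hxX
      · have h2 := hw z0 (Finset.mem_insert_self _ _)
        rw [hhz0] at h2
        rw [h1]
        exact h2
      · set j := e.symm ⟨x, hxX⟩ with hj
        have hjJ : (j : V) ∈ J := j.2
        have := hw (j : V) (Finset.mem_insert_of_mem hjJ)
        rw [hhJ (j : V) hjJ] at this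
        have hex : e ⟨(j : V), hjJ⟩ = ⟨x, hxX⟩ := by
          have h3 : (⟨(j : V), hjJ⟩ : {x // x ∈ J}) = j := Subtype.coe_eta _ _
          rw [h3, hj, e.apply_symm_apply]
        rwa [hex] at this
    rw [F2 z0 hz0] at this
    exact this

/-- If `G` is ME-homogeneous and has no bad sets, then it is MB-homogeneous,
by a back-and-forth argument. -/
lemma mb_of_no_bad (hME : IsMEHom G) (hnb : ∀ X : Finset V, ¬ BadSet G X) :
    IsMBHom G := by
  intro A₀ f₀ h₀
  have step : ∀ (A : Finset V) (f : V → V), IsMonOn G A f → ∀ w : V,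
      ∃ (A' : Finset V) (f' : V → V), IsMonOn G A' f' ∧ A ⊆ A' ∧
        (∀ a ∈ A, f' a = f a) ∧ w ∈ A' ∧ ∃ a ∈ A', f' a = w := by
    intro A f hf w
    obtain ⟨A₁, f₁, hf₁, hsub₁, hagr₁, hwdom⟩ :
        ∃ A₁ f₁, IsMonOn G A₁ f₁ ∧ A ⊆ A₁ ∧ (∀ a ∈ A, f₁ a = f a) ∧ w ∈ A₁ := by
      by_cases hw : w ∈ A
      · exact ⟨A, f, hf, subset_rfl, fun _ _ => rfl, hw⟩
      · obtain ⟨d, _, hf', _⟩ := forward_ext hME hnb hf hw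
        refine ⟨insert w A, extendBy f w d, hf', Finset.subset_insert _ _, ?_,
          Finset.mem_insert_self _ _⟩
        intro a ha
        have : a ≠ w := fun h => hw (h ▸ ha)
        simp [extendBy, Function.update_of_ne this]
    by_cases hwim : ∃ a ∈ A₁, f₁ a = w
    · exact ⟨A₁, f₁, hf₁, hsub₁, hagr₁, hwdom, hwim⟩
    · have hwim' : w ∉ f₁ '' (↑A₁ : Set V) := by
        rintro ⟨a, ha, rfl⟩
        exact hwim ⟨a, by exact_mod_cast ha, rfl⟩
      obtain ⟨a, haA, hmon, hval⟩ := back_ext hME hf₁ hwim'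
      refine ⟨insert a A₁, extendBy f₁ a w, hmon,
        hsub₁.trans (Finset.subset_insert _ _), ?_,
        Finset.mem_insert_of_mem hwdom, ⟨a, Finset.mem_insert_self _ _, hval⟩⟩
      intro b hb
      have hba : b ≠ a := fun h => haA (h ▸ hsub₁ hb)
      rw [show extendBy f₁ a w b = f₁ b by
        simp [extendBy, Function.update_of_ne hba]]
      exact hagr₁ b hb
  obtain ⟨enum⟩ : Nonempty (V ≃ ℕ) := by
    have : Encodable V := Encodable.ofCountable V
    have : Denumerable V := Denumerable.ofEncodableOfInfinite V
    exact ⟨Denumerable.eqv V⟩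
  choose stA stf stmon stsub stagr stdom stim using step
  let ch : ℕ → Σ' (A : Finset V) (f : V → V), IsMonOn G A f :=
    fun n => Nat.rec ⟨A₀, f₀, h₀⟩
      (fun i p => ⟨stA p.1 p.2.1 p.2.2 (enum.symm i),
        stf p.1 p.2.1 p.2.2 (enum.symm i), stmon p.1 p.2.1 p.2.2 (enum.symm i)⟩) n
  have chsub : ∀ i, (ch i).1 ⊆ (ch (i+1)).1 := fun i => stsub _ _ _ _
  have chagr : ∀ i, ∀ a ∈ (ch i).1, (ch (i+1)).2.1 a = (ch i).2.1 a :=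
    fun i => stagr _ _ _ _
  have chdom : ∀ i, enum.symm i ∈ (ch (i+1)).1 := fun i => stdom _ _ _ _
  have chim : ∀ i, ∃ a ∈ (ch (i+1)).1, (ch (i+1)).2.1 a = enum.symm i :=
    fun i => stim _ _ _ _
  have chmono : ∀ i j, i ≤ j →
      (ch i).1 ⊆ (ch j).1 ∧ ∀ a ∈ (ch i).1, (ch j).2.1 a = (ch i).2.1 a := by
    intro i j hij
    induction j with
    | zero =>
      cases Nat.le_zero.1 hij
      exact ⟨subset_rfl, fun _ _ => rfl⟩
    | succ j ih =>
      rcases Nat.lt_or_ge i (j+1) with h | h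
      · obtain ⟨hs, ha⟩ := ih (Nat.lt_succ_iff.1 h)
        refine ⟨hs.trans (chsub j), fun a haI => ?_⟩
        rw [chagr j a (hs haI), ha a haI]
      · have : i = j + 1 := le_antisymm hij h
        subst this
        exact ⟨subset_rfl, fun _ _ => rfl⟩
  set F : V → V := fun v => (ch (enum v + 1)).2.1 v with hF
  have dom : ∀ v, v ∈ (ch (enum v + 1)).1 := by
    intro v
    have := chdom (enum v)
    rwa [Equiv.symm_apply_apply] at this
  have Fval : ∀ (v : V) (N : ℕ), enum v + 1 ≤ N → F v = (ch N).2.1 v :=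
    fun v N h => ((chmono _ _ h).2 v (dom v)).symm
  have domN : ∀ (v : V) (N : ℕ), enum v + 1 ≤ N → v ∈ (ch N).1 :=
    fun v N h => (chmono _ _ h).1 (dom v)
  refine ⟨F, ⟨?_, ?_, ?_⟩, ?_⟩
  · intro u v huv
    set N := max (enum u + 1) (enum v + 1) with hN
    rw [Fval u N (le_max_left _ _), Fval v N (le_max_right _ _)]
    exact (ch N).2.2.1 (domN u N (le_max_left _ _)) (domN v N (le_max_right _ _)) huv
  · intro u v heq
    set N := max (enum u + 1) (enum v + 1) with hN
    rw [Fval u N (le_max_left _ _), Fval v N (le_max_right _ _)] at heq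
    exact (ch N).2.2.2 (Finset.mem_coe.2 (domN u N (le_max_left _ _)))
      (Finset.mem_coe.2 (domN v N (le_max_right _ _))) heq
  · intro w
    obtain ⟨a, haA, hval⟩ := chim (enum w)
    refine ⟨a, ?_⟩
    have h1 : F a = (ch (max (enum a + 1) (enum w + 1))).2.1 a :=
      Fval a _ (le_max_left _ _)
    have h2 : (ch (max (enum a + 1) (enum w + 1))).2.1 a = (ch (enum w + 1)).2.1 a :=
      (chmono (enum w + 1) _ (le_max_right _ _)).2 a haA
    rw [h1, h2, hval, Equiv.symm_apply_apply]
  · intro a ha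
    have h1 : F a = (ch (enum a + 1)).2.1 a := rfl
    have h2 : (ch (enum a + 1)).2.1 a = (ch 0).2.1 a :=
      (chmono 0 (enum a + 1) (Nat.zero_le _)).2 a ha
    rw [h1, h2]
    rfl

/-- Structure case: a bad set plus no cherry forces `G` to be a disjoint union of
countably many copies of `K_n` for some finite `n ≥ 2`. -/
lemma iso_cliqueSum_of_bad (hME : IsMEHom G)
    (hnch : ¬ ∃ b b' w : V, b ≠ b' ∧ ¬ G.Adj b b' ∧ G.Adj w b ∧ G.Adj w b')
    {X : Finset V} (hbad : BadSet G X) :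
    ∃ n : ℕ, 2 ≤ n ∧ Nonempty (G ≃g cliqueSum ℕ (Fin n)) := by
  classical
  obtain ⟨hXne, ⟨z0, hz0⟩, hfin⟩ := hbad
  push_neg at hnch
  have htrans : ∀ u v w : V, G.Adj w u → G.Adj w v → u ≠ v → G.Adj u v := by
    intro u v w h1 h2 huv
    by_contra hn
    exact hnch u v w huv hn h1 h2
  set R : V → V → Prop := fun u v => u = v ∨ G.Adj u v with hR
  have Rrefl : ∀ u, R u u := fun u => Or.inl rfl
  have Rsymm : ∀ {u v}, R u v → R v u := by
    rintro u v (rfl | h)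
    exacts [Or.inl rfl, Or.inr h.symm]
  have Rtrans : ∀ {u v w}, R u v → R v w → R u w := by
    rintro u v w (rfl | h1) h2
    · exact h2
    · rcases h2 with rfl | h2
      · exact Or.inr h1
      · rcases eq_or_ne u w with rfl | huw
        · exact Or.inl rfl
        · exact Or.inr (htrans u w v h1.symm h2 huw)
  have hz0X : z0 ∉ X := fun h => coneSet_not_mem hz0 h
  -- the class of z0 is finite
  have hclass_sub : {v | R v z0} ⊆ insert z0 ((↑X : Set V) ∪ coneSet G X) := by
    intro v hv
    rcases hv with rfl | hadj
    · exact Set.mem_insert _ _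
    · by_cases hvX : v ∈ X
      · exact Set.mem_insert_of_mem _ (Or.inl (by exact_mod_cast hvX))
      · refine Set.mem_insert_of_mem _ (Or.inr ?_)
        intro x hx
        have hvx : v ≠ x := fun h => hvX (h ▸ hx)
        exact htrans v x z0 hadj.symm (hz0 x hx) hvx
  have hclassfin : {v | R v z0}.Finite :=
    (((X.finite_toSet).union hfin).insert z0).subset hclass_sub
  set n := {v | R v z0}.ncard with hn
  -- 2 ≤ n
  obtain ⟨x0, hx0⟩ := hXne
  have hx0c : x0 ∈ {v | R v z0} := Or.inr (hz0 x0 hx0).symm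
  have hz0c : z0 ∈ {v | R v z0} := Rrefl z0
  have hn2 : 2 ≤ n := by
    have : 1 < {v | R v z0}.ncard :=
      (Set.one_lt_ncard hclassfin).2 ⟨z0, hz0c, x0, hx0c, fun h => hz0X (h ▸ hx0)⟩
    omega
  -- point homomorphisms
  have pt : ∀ u v : V, ∃ F, IsHomEndo G F ∧ F u = v := by
    intro u v
    have hmon : IsMonOn G ({u} : Finset V) (fun _ => v) := by
      constructor
      · intro a b ha hb hab
        rw [Finset.mem_singleton] at ha hb
        rw [ha, hb] at hab
        exact absurd hab G.irrefl
      · intro a ha b hb _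
        have ha' : a ∈ ({u} : Finset V) := by exact_mod_cast ha
        have hb' : b ∈ ({u} : Finset V) := by exact_mod_cast hb
        rw [Finset.mem_singleton] at ha' hb'
        rw [ha', hb']
    obtain ⟨F, hF, hagr⟩ := hME _ _ hmon
    exact ⟨F, hF.1, hagr u (Finset.mem_singleton_self _)⟩
  have hinj_class : ∀ u v : V,
      ∃ F : V → V, Set.MapsTo F {w | R w u} {w | R w v} ∧ Set.InjOn F {w | R w u} := by
    intro u v
    obtain ⟨F, hFhom, hFu⟩ := pt u v
    refine ⟨F, ?_, ?_⟩
    · intro w hw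
      rcases hw with rfl | hadj
      · exact hFu ▸ Rrefl v
      · exact Or.inr (hFu ▸ hFhom hadj)
    · intro w hw w' hw' heq
      by_contra hne
      have hww' : R w w' := Rtrans hw (Rsymm hw')
      rcases hww' with h | h
      · exact hne h
      · exact (hFhom h).ne heq
  have hclassfin' : ∀ v, {w | R w v}.Finite := by
    intro v
    obtain ⟨F, hmap, hinj⟩ := hinj_class v z0
    exact Set.Finite.of_finite_image (hclassfin.subset hmap.image_subset) hinj
  have hclasscard : ∀ v, {w | R w v}.ncard = n := by
    intro v
    apply le_antisymm
    · obtain ⟨F, hmap, hinj⟩ := hinj_class v z0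
      exact Set.ncard_le_ncard_of_injOn F hmap hinj hclassfin
    · obtain ⟨F, hmap, hinj⟩ := hinj_class z0 v
      exact Set.ncard_le_ncard_of_injOn F hmap hinj (hclassfin' v)
  -- build the quotient
  set s : Setoid V := ⟨R, ⟨Rrefl, fun {a b} => Rsymm, fun {a b c} => Rtrans⟩⟩ with hs
  have hfibeq : ∀ c : V, {v | Quotient.mk s v = Quotient.mk s c} = {w | R w c} := by
    intro c
    ext v
    constructor
    · intro h
      exact Quotient.exact h
    · intro h
      exact Quotient.sound h
  have hfibfin : ∀ q : Quotient s, {v | Quotient.mk s v = q}.Finite := by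
    intro q
    induction q using Quotient.ind with
    | _ c => rw [hfibeq c]; exact hclassfin' c
  have hfibcard : ∀ q : Quotient s, {v | Quotient.mk s v = q}.ncard = n := by
    intro q
    induction q using Quotient.ind with
    | _ c => rw [hfibeq c]; exact hclasscard c
  haveI hQcount : Countable (Quotient s) := inferInstance
  haveI hQinf : Infinite (Quotient s) := by
    by_contra hfinQ
    rw [not_infinite_iff_finite] at hfinQ
    haveI : ∀ q : Quotient s, Finite {v // Quotient.mk s v = q} :=
      fun q => (hfibfin q).to_subtype
    haveI : Finite ((q : Quotient s) × {v // Quotient.mk s v = q}) := inferInstance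
    haveI : Finite V := Finite.of_equiv _ (Equiv.sigmaFiberEquiv (Quotient.mk s))
    exact Infinite.not_finite (α := V) this
  obtain ⟨σ⟩ : Nonempty (Quotient s ≃ ℕ) := by
    have : Encodable (Quotient s) := Encodable.ofCountable _
    have : Denumerable (Quotient s) := Denumerable.ofEncodableOfInfinite _
    exact ⟨Denumerable.eqv _⟩
  have τ : ∀ q : Quotient s, {v // Quotient.mk s v = q} ≃ Fin n := by
    intro q
    haveI : Fintype {v // Quotient.mk s v = q} := (hfibfin q).fintype
    apply Fintype.equivFinOfCardEq
    have h1 : Nat.card {v // Quotient.mk s v = q} = n := by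
      rw [show {v // Quotient.mk s v = q} = ↥{v | Quotient.mk s v = q} from rfl,
        Nat.card_coe_set_eq, hfibcard q]
    rw [← h1]
    exact (Nat.card_eq_fintype_card).symm
  set E : V ≃ ℕ × Fin n :=
    (Equiv.sigmaFiberEquiv (Quotient.mk s)).symm.trans
      ((Equiv.sigmaCongrRight τ).trans
        ((Equiv.sigmaEquivProd (Quotient s) (Fin n)).trans
          (Equiv.prodCongr σ (Equiv.refl (Fin n))))) with hE
  have hE1 : ∀ v : V, (E v).1 = σ (Quotient.mk s v) := fun v => rfl
  refine ⟨n, hn2, ⟨⟨E, ?_⟩⟩⟩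
  intro a b
  show (cliqueSum ℕ (Fin n)).Adj (E a) (E b) ↔ G.Adj a b
  rw [cliqueSum, SimpleGraph.fromRel_adj]
  constructor
  · rintro ⟨hne, h1 | h1⟩ <;>
    · have hq : Quotient.mk s a = Quotient.mk s b := by
        apply σ.injective
        rw [← hE1 a, ← hE1 b]
        first
          | exact h1
          | exact h1.symm
      have hab : R a b := Quotient.exact hq
      rcases hab with rfl | hab
      · exact absurd rfl hne
      · exact hab
  · intro hadj
    refine ⟨fun h => G.ne_of_adj hadj (E.injective h), Or.inl ?_⟩
    rw [hE1 a, hE1 b]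
    exact congrArg σ (Quotient.sound (Or.inr hadj))

/-- MB-homogeneous implies ME-homogeneous. -/
lemma me_of_mb {W : Type} {H : SimpleGraph W} (h : IsMBHom H) : IsMEHom H := by
  intro A f hf
  obtain ⟨F, ⟨hhom, hbij⟩, hagr⟩ := h A f hf
  exact ⟨F, ⟨hhom, hbij.2⟩, hagr⟩

/-- ME-homogeneity transports along graph isomorphisms. -/
lemma me_of_iso {V₁ W : Type} {G₁ : SimpleGraph V₁} {H : SimpleGraph W}
    (φ : G₁ ≃g H) (hH : IsMEHom H) : IsMEHom G₁ := by
  classical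
  intro A f hf
  set f' : W → W := fun w => φ (f (φ.symm w)) with hf'def
  set A' : Finset W := A.image φ with hA'
  have hmem : ∀ w, w ∈ A' ↔ ∃ a ∈ A, φ a = w := by
    intro w; simp [hA']
  have hf' : IsMonOn H A' f' := by
    constructor
    · intro u v hu hv huv
      obtain ⟨a, ha, rfl⟩ := (hmem u).1 hu
      obtain ⟨b, hb, rfl⟩ := (hmem v).1 hv
      have hab : G₁.Adj a b := φ.map_adj_iff.1 huv
      have h1 : G₁.Adj (f a) (f b) := hf.1 ha hb hab
      have h2 : H.Adj (φ (f a)) (φ (f b)) := φ.map_adj_iff.2 h1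
      show H.Adj (φ (f (φ.symm (φ a)))) (φ (f (φ.symm (φ b))))
      rw [φ.symm_apply_apply, φ.symm_apply_apply]
      exact h2
    · intro u hu v hv heq
      obtain ⟨a, ha, rfl⟩ := (hmem u).1 (by exact_mod_cast hu)
      obtain ⟨b, hb, rfl⟩ := (hmem v).1 (by exact_mod_cast hv)
      have heq' : φ (f a) = φ (f b) := by
        have h1 : f' (φ a) = φ (f a) := by
          show φ (f (φ.symm (φ a))) = _
          rw [φ.symm_apply_apply]
        have h2 : f' (φ b) = φ (f b) := by
          show φ (f (φ.symm (φ b))) = _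
          rw [φ.symm_apply_apply]
        rw [← h1, ← h2]
        exact heq
      have := hf.2 ha hb (φ.injective heq')
      rw [this]
  obtain ⟨F', hepi', hagr'⟩ := hH A' f' hf'
  refine ⟨fun v => φ.symm (F' (φ v)), ⟨?_, ?_⟩, ?_⟩
  · intro u v huv
    have h1 : H.Adj (φ u) (φ v) := φ.map_adj_iff.2 huv
    have h2 : H.Adj (F' (φ u)) (F' (φ v)) := hepi'.1 h1
    exact φ.symm.map_adj_iff.2 h2
  · intro v
    obtain ⟨w', hw'⟩ := hepi'.2 (φ v)
    refine ⟨φ.symm w', ?_⟩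
    show φ.symm (F' (φ (φ.symm w'))) = v
    rw [φ.apply_symm_apply, hw', φ.symm_apply_apply]
  · intro a ha
    have haA' : φ a ∈ A' := (hmem (φ a)).2 ⟨a, ha, rfl⟩
    show φ.symm (F' (φ a)) = f a
    rw [hagr' _ haA']
    show φ.symm (φ (f (φ.symm (φ a)))) = f a
    rw [φ.symm_apply_apply, φ.symm_apply_apply]

lemma cliqueSum_adj {n : ℕ} (p q : ℕ × Fin n) :
    (cliqueSum ℕ (Fin n)).Adj p q ↔ p ≠ q ∧ p.1 = q.1 := by
  rw [cliqueSum, SimpleGraph.fromRel_adj]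
  constructor
  · rintro ⟨h, h1 | h1⟩
    · exact ⟨h, h1⟩
    · exact ⟨h, h1.symm⟩
  · rintro ⟨h, h1⟩
    exact ⟨h, Or.inl h1⟩

/-- Any partial injection of `Fin n` extends to a bijection. -/
lemma extend_inj (n : ℕ) (s : Finset (Fin n)) (g : Fin n → Fin n)
    (hinj : Set.InjOn g ↑s) :
    ∃ σ : Fin n → Fin n, Function.Bijective σ ∧ ∀ x ∈ s, σ x = g x := by
  classical
  set t := s.image g with ht
  have hcard : t.card = s.card := Finset.card_image_of_injOn hinj
  have hccard : sᶜ.card = tᶜ.card := by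
    rw [Finset.card_compl, Finset.card_compl, hcard]
  obtain e := Finset.equivOfCardEq hccard
  set σ : Fin n → Fin n := fun x =>
    if hx : x ∈ s then g x else (e ⟨x, Finset.mem_compl.2 hx⟩ : Fin n) with hσ
  have hval : ∀ x ∈ s, σ x = g x := by
    intro x hx; simp [hσ, dif_pos hx]
  have hinj' : Function.Injective σ := by
    intro a b heq
    by_cases ha : a ∈ s <;> by_cases hb : b ∈ s
    · exact hinj (by exact_mod_cast ha) (by exact_mod_cast hb)
        (by rwa [hval a ha, hval b hb] at heq)
    · exfalso
      rw [hval a ha, show σ b = (e ⟨b, Finset.mem_compl.2 hb⟩ : Fin n) by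
        simp [hσ, dif_neg hb]] at heq
      have h1 : g a ∈ t := Finset.mem_image_of_mem g ha
      have h2 := (e ⟨b, Finset.mem_compl.2 hb⟩).2
      rw [Finset.mem_compl] at h2
      exact h2 (heq ▸ h1)
    · exfalso
      rw [hval b hb, show σ a = (e ⟨a, Finset.mem_compl.2 ha⟩ : Fin n) by
        simp [hσ, dif_neg ha]] at heq
      have h1 : g b ∈ t := Finset.mem_image_of_mem g hb
      have h2 := (e ⟨a, Finset.mem_compl.2 ha⟩).2
      rw [Finset.mem_compl] at h2
      exact h2 (heq ▸ h1)
    · rw [show σ a = (e ⟨a, Finset.mem_compl.2 ha⟩ : Fin n) by simp [hσ, dif_neg ha],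
        show σ b = (e ⟨b, Finset.mem_compl.2 hb⟩ : Fin n) by simp [hσ, dif_neg hb]] at heq
      have := e.injective (Subtype.ext heq)
      exact congrArg Subtype.val this
  exact ⟨σ, Finite.injective_iff_bijective.1 hinj', hval⟩

/-- The countable union of `n`-cliques is ME-homogeneous. -/
lemma me_cliqueSum (n : ℕ) : IsMEHom (cliqueSum ℕ (Fin n)) := by
  classical
  intro A f hf
  set T : Finset ℕ := A.image Prod.fst with hT
  -- the target clique of each touched clique
  set tfun : ℕ → ℕ := fun i =>
    if h : (A.filter (fun a => a.1 = i)).Nonempty then (f h.choose).1 else 0 with htfun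
  have huni : ∀ a ∈ A, (f a).1 = tfun a.1 := by
    intro a ha
    have hne : (A.filter (fun b => b.1 = a.1)).Nonempty :=
      ⟨a, Finset.mem_filter.2 ⟨ha, rfl⟩⟩
    rw [htfun]
    simp only [dif_pos hne]
    by_cases hab : a = hne.choose
    · rw [← hab]
    · have hbmem := hne.choose_spec
      rw [Finset.mem_filter] at hbmem
      have hadj : (cliqueSum ℕ (Fin n)).Adj a hne.choose :=
        (cliqueSum_adj _ _).2 ⟨hab, hbmem.2.symm⟩
      have := hf.1 ha hbmem.1 hadj
      exact ((cliqueSum_adj _ _).1 this).2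
  -- the per-clique partial injections
  set sfun : ℕ → Finset (Fin n) := fun i => (A.filter (fun a => a.1 = i)).image Prod.snd
    with hsfun
  set gfun : ℕ → Fin n → Fin n := fun i x => (f (i, x)).2 with hgfun
  have hsmem : ∀ i x, x ∈ sfun i → (i, x) ∈ A := by
    intro i x hx
    rw [hsfun] at hx
    obtain ⟨a, ha, rfl⟩ := Finset.mem_image.1 hx
    rw [Finset.mem_filter] at ha
    rw [← ha.2]
    exact ha.1
  have hginj : ∀ i, Set.InjOn (gfun i) ↑(sfun i) := by
    intro i x hx y hy hxy
    have hxA := hsmem i x (by exact_mod_cast hx)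
    have hyA := hsmem i y (by exact_mod_cast hy)
    by_contra hne
    have hadj : (cliqueSum ℕ (Fin n)).Adj (i, x) (i, y) :=
      (cliqueSum_adj _ _).2 ⟨by simp [hne], rfl⟩
    have h2 := hf.1 hxA hyA hadj
    have h3 := (cliqueSum_adj _ _).1 h2
    exact h3.1 (Prod.ext h3.2 hxy)
  choose σfun hσbij hσval using fun i => extend_inj n (sfun i) (gfun i) (hginj i)
  haveI hTinf : Infinite ↥((↑T : Set ℕ)ᶜ) := ((T.finite_toSet).infinite_compl).to_subtype
  haveI : DecidablePred (· ∈ ((↑T : Set ℕ)ᶜ)) := Classical.decPred _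
  haveI : Denumerable ↥((↑T : Set ℕ)ᶜ) := Nat.Subtype.denumerable _
  set e : ↥((↑T : Set ℕ)ᶜ) ≃ ℕ := Denumerable.eqv _ with he
  set F : ℕ × Fin n → ℕ × Fin n := fun p =>
    if h : p.1 ∈ T then (tfun p.1, σfun p.1 p.2)
    else (e ⟨p.1, by simpa using h⟩, p.2) with hF
  have hFT : ∀ p : ℕ × Fin n, p.1 ∈ T → F p = (tfun p.1, σfun p.1 p.2) := by
    intro p h; simp [hF, dif_pos h]
  have hFnT : ∀ (p : ℕ × Fin n) (h : p.1 ∉ T),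
      F p = (e ⟨p.1, by simpa using h⟩, p.2) := by
    intro p h; simp [hF, dif_neg h]
  refine ⟨F, ⟨?_, ?_⟩, ?_⟩
  · intro p q hpq
    obtain ⟨hne, hfst⟩ := (cliqueSum_adj p q).1 hpq
    have hsnd : p.2 ≠ q.2 := fun h => hne (Prod.ext hfst h)
    apply (cliqueSum_adj _ _).2
    by_cases h : p.1 ∈ T
    · have hq : q.1 ∈ T := hfst ▸ h
      rw [hFT p h, hFT q hq]
      constructor
      · intro hc
        rw [Prod.ext_iff] at hc
        have h5 := hc.2
        rw [← hfst] at h5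
        exact hsnd ((hσbij p.1).1 h5)
      · simp [hfst]
    · have hq : q.1 ∉ T := hfst ▸ h
      rw [hFnT p h, hFnT q hq]
      constructor
      · intro hc
        rw [Prod.ext_iff] at hc
        exact hsnd hc.2
      · simp only
        exact congrArg e (Subtype.ext hfst)
  · intro q
    set i := e.symm q.1 with hi
    have hiT : (i : ℕ) ∉ T := fun hmem => i.2 (Finset.mem_coe.2 hmem)
    refine ⟨((i : ℕ), q.2), ?_⟩
    rw [hFnT _ hiT]
    have h6 : ∀ hp : ((i : ℕ) : ℕ) ∈ ((↑T : Set ℕ)ᶜ), e ⟨(i : ℕ), hp⟩ = q.1 := by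
      intro hp
      have h7 : (⟨(i : ℕ), hp⟩ : ↥((↑T : Set ℕ)ᶜ)) = i := Subtype.coe_eta _ _
      rw [h7, hi, e.apply_symm_apply]
    rw [h6]
  · intro a ha
    have haT : a.1 ∈ T := by
      rw [hT]
      exact Finset.mem_image_of_mem _ ha
    rw [hFT a haT]
    have h1 : tfun a.1 = (f a).1 := (huni a ha).symm
    have h2 : σfun a.1 a.2 = (f a).2 := by
      have hmem : a.2 ∈ sfun a.1 := by
        rw [hsfun]
        exact Finset.mem_image_of_mem _ (Finset.mem_filter.2 ⟨ha, rfl⟩)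
      rw [hσval a.1 a.2 hmem, hgfun]
    rw [h1, h2]

end MEProof

/-- A countably infinite graph is ME-homogeneous iff it is MB-homogeneous or
isomorphic to `I_ω[K_n]` for some finite `n ≥ 2`. -/
theorem stmt_19 {V : Type} [Countable V] [Infinite V] (G : SimpleGraph V) :
    IsMEHom G ↔
      (IsMBHom G ∨ ∃ n : ℕ, 2 ≤ n ∧ Nonempty (G ≃g cliqueSum ℕ (Fin n))) := by
  constructor
  · intro hME
    by_cases hbad : ∃ X : Finset V, BadSet G X
    · obtain ⟨X, hX⟩ := hbad
      right
      exact iso_cliqueSum_of_bad hME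
        (fun hch => no_bad_of_cherry hME hch X hX) hX
    · left
      push_neg at hbad
      exact mb_of_no_bad hME hbad
  · rintro (hmb | ⟨n, hn2, ⟨φ⟩⟩)
    · exact me_of_mb hmb
    · exact me_of_iso φ (me_cliqueSum n)
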